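/- Let r ≥ 2, N ≥ 2, let c_1,…,c_N be pairwise distinct complex numbers, and set f(λ) = Π_{i=1}^N (λ − c_i). Let A_1,…,A_N and A⁰_1,…,A⁰_N be r×r complex matrices such that for each i the matrix A_i is similar to A⁰_i (i.e. A_i = g_i A⁰_i g_i^{-1} for some invertible g_i). Define the matrix-valued polynomials L(λ) = Σ_{i=1}^N A_i · Π_{j≠i}(λ − c_j) and L⁰(λ) = Σ_{i=1}^N A⁰_i · Π_{j≠i}(λ − c_j). Then there exist polynomials p_2(λ),…,p_r(λ) ∈ ℂ[λ] with deg p_ℓ ≤ (N−1)ℓ − N such that, as polynomials in the two variables λ and μ̃, det(L(λ) − μ̃ I) = det(L⁰(λ) − μ̃ I) + f(λ) · Σ_{ℓ=2}^r p_ℓ(λ) μ̃^{r−ℓ}. -/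

import Mathlib

open Matrix Finset

open Polynomial


lemma charpoly_conj_aux {n R : Type*} [DecidableEq n] [Fintype n] [CommRing R]
    (g : (Matrix n n R)ˣ) (B : Matrix n n R) :
    ((g : Matrix n n R) * B * (↑g⁻¹ : Matrix n n R)).charpoly = B.charpoly := by
  let G : (Matrix n n R[X])ˣ := Units.map (RingHom.toMonoidHom (C : R →+* R[X]).mapMatrix) g
  have hG : (G : Matrix n n R[X]) = ((g : Matrix n n R)).map C := rfl
  have hG' : ((↑G⁻¹ : Matrix n n R[X])) = ((↑g⁻¹ : Matrix n n R)).map C := rfl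
  have hGG : (G : Matrix n n R[X]) * (↑G⁻¹ : Matrix n n R[X]) = 1 := G.mul_inv
  have key : charmatrix ((g : Matrix n n R) * B * (↑g⁻¹ : Matrix n n R))
      = (G : Matrix n n R[X]) * charmatrix B * (↑G⁻¹ : Matrix n n R[X]) := by
    simp only [charmatrix, RingHom.mapMatrix_apply]
    rw [Matrix.mul_sub, Matrix.sub_mul]
    congr 1
    · rw [← (scalar_commute (X : R[X]) (Commute.all X) (G : Matrix n n R[X])).eq, Matrix.mul_assoc, hGG, Matrix.mul_one]
    · rw [hG, hG', ← Matrix.map_mul, ← Matrix.map_mul]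
  rw [Matrix.charpoly, key, det_units_conj, Matrix.charpoly]

/-- Bidegree control: `p ∈ ℂ[z][X]` has `X`-degree ≤ d and the coefficient of `X^k`
has `z`-degree ≤ D*(d-k). -/
def GoodP (D d : ℕ) (p : Polynomial (Polynomial ℂ)) : Prop :=
  ∀ k, (d < k → p.coeff k = 0) ∧ (p.coeff k).natDegree ≤ D * (d - k)

lemma GoodP.mul {D d e : ℕ} {p q : Polynomial (Polynomial ℂ)}
    (hp : GoodP D d p) (hq : GoodP D e q) : GoodP D (d + e) (p * q) := by
  intro k
  rw [Polynomial.coeff_mul]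
  constructor
  · intro hk
    apply Finset.sum_eq_zero
    intro x hx
    rw [Finset.HasAntidiagonal.mem_antidiagonal] at hx
    by_cases h1 : d < x.1
    · rw [(hp x.1).1 h1, zero_mul]
    · have h2 : e < x.2 := by omega
      rw [(hq x.2).1 h2, mul_zero]
  · apply Polynomial.natDegree_sum_le_of_forall_le
    intro x hx
    rw [Finset.HasAntidiagonal.mem_antidiagonal] at hx
    by_cases h1 : d < x.1
    · rw [(hp x.1).1 h1, zero_mul]; simp
    · by_cases h2 : e < x.2
      · rw [(hq x.2).1 h2, mul_zero]; simp
      · refine (Polynomial.natDegree_mul_le).trans ?_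
        have := (hp x.1).2
        have := (hq x.2).2
        calc (p.coeff x.1).natDegree + (q.coeff x.2).natDegree
            ≤ D * (d - x.1) + D * (e - x.2) := add_le_add (hp x.1).2 (hq x.2).2
          _ = D * (d + e - k) := by rw [← Nat.mul_add]; congr 1; omega

lemma GoodP.one {D : ℕ} : GoodP D 0 1 := by
  intro k
  rcases k with _ | k <;> simp [Polynomial.coeff_one]

lemma GoodP.prod {D : ℕ} {ι : Type*} (s : Finset ι) (f : ι → Polynomial (Polynomial ℂ))
    (h : ∀ i ∈ s, GoodP D 1 (f i)) : GoodP D s.card (∏ i ∈ s, f i) := by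
  induction s using Finset.cons_induction with
  | empty => simpa using GoodP.one
  | cons a s ha ih =>
    rw [Finset.prod_cons, Finset.card_cons, add_comm s.card 1]
    exact (h a (Finset.mem_cons_self a s)).mul (ih fun i hi => h i (Finset.mem_cons.2 (Or.inr hi)))

lemma GoodP.neg {D d : ℕ} {p : Polynomial (Polynomial ℂ)} (hp : GoodP D d p) :
    GoodP D d (-p) := by
  intro k
  rw [Polynomial.coeff_neg]
  exact ⟨fun hk => by rw [(hp k).1 hk, neg_zero], (Polynomial.natDegree_neg _).le.trans (hp k).2⟩

lemma GoodP.sum {D d : ℕ} {ι : Type*} (s : Finset ι) (f : ι → Polynomial (Polynomial ℂ))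
    (h : ∀ i ∈ s, GoodP D d (f i)) : GoodP D d (∑ i ∈ s, f i) := by
  intro k
  rw [Polynomial.finset_sum_coeff]
  constructor
  · intro hk; exact Finset.sum_eq_zero fun i hi => (h i hi k).1 hk
  · exact Polynomial.natDegree_sum_le_of_forall_le _ _ fun i hi => (h i hi k).2

lemma goodP_charmatrix {D : ℕ} {r : ℕ} (M : Matrix (Fin r) (Fin r) (Polynomial ℂ))
    (hM : ∀ i j, (M i j).natDegree ≤ D) (i j : Fin r) :
    GoodP D 1 (charmatrix M i j) := by
  intro k
  by_cases hij : i = j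
  · subst hij
    rw [charmatrix_apply_eq]
    rcases k with _ | _ | k
    · simpa using (Polynomial.natDegree_neg (M i i)).le.trans (hM i i)
    · simp
    · simp [Polynomial.coeff_X]
  · rw [charmatrix_apply_ne _ _ _ hij]
    rcases k with _ | k
    · simpa using (Polynomial.natDegree_neg (M i j)).le.trans (hM i j)
    · simp

lemma charpoly_coeff_natDegree_le {D : ℕ} {r : ℕ} (M : Matrix (Fin r) (Fin r) (Polynomial ℂ))
    (hM : ∀ i j, (M i j).natDegree ≤ D) (k : ℕ) :
    (M.charpoly.coeff k).natDegree ≤ D * (r - k) := by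
  have hgood : GoodP D r M.charpoly := by
    rw [Matrix.charpoly, Matrix.det_apply]
    have : (Finset.univ : Finset (Fin r)).card = r := by simp
    refine GoodP.sum _ _ fun σ _ => ?_
    have hprod : GoodP D r (∏ i, charmatrix M (σ i) i) := by
      have := GoodP.prod (Finset.univ : Finset (Fin r)) (fun i => charmatrix M (σ i) i)
        (fun i _ => goodP_charmatrix M hM (σ i) i)
      simpa [this] using this
    rcases Int.units_eq_one_or (Equiv.Perm.sign σ) with h | h
    · rw [h, one_smul]; exact hprod
    · rw [h, Units.smul_def, Units.val_neg, Units.val_one, neg_zsmul, one_zsmul]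
      exact hprod.neg
  exact (hgood k).2

lemma prod_X_sub_C_dvd_of_roots {N : ℕ} (c : Fin N → ℂ) (hcinj : Function.Injective c)
    {p : Polynomial ℂ} (hroot : ∀ m : Fin N, p.eval (c m) = 0) :
    (∏ i, (X - C (c i))) ∣ p := by
  by_cases hp : p = 0
  · simp [hp]
  have h1 : ∏ a ∈ Finset.univ.image c, (X - C a) = ∏ i, (X - C (c i)) :=
    Finset.prod_image fun i _ j _ h => hcinj h
  rw [← h1, Finset.prod_eq_multiset_prod]
  rw [show ((Finset.univ.image c).val.map fun a => X - C a) =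
    (Multiset.map (fun a => X - C a) (Finset.univ.image c).val) from rfl]
  rw [Multiset.prod_X_sub_C_dvd_iff_le_roots hp]
  rw [Multiset.le_iff_count]
  intro a
  by_cases ha : a ∈ (Finset.univ.image c).val
  · have h2 : (Finset.univ.image c).val.count a = 1 :=
      Multiset.count_eq_one_of_mem (Finset.univ.image c).nodup ha
    rw [h2]
    rw [Multiset.one_le_count_iff_mem, Polynomial.mem_roots hp]
    obtain ⟨m, _, rfl⟩ := Finset.mem_image.1 (show a ∈ Finset.univ.image c from ha)
    exact hroot m
  · rw [Multiset.count_eq_zero_of_notMem ha]; exact Nat.zero_le _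

lemma det_sub_smul_one {r : ℕ} (B : Matrix (Fin r) (Fin r) ℂ) (μ : ℂ) :
    (B - μ • (1 : Matrix (Fin r) (Fin r) ℂ)).det = (-1 : ℂ) ^ r * (B.charpoly.eval μ) := by
  have h1 : B.charpoly.eval μ = ((charmatrix B).map (evalRingHom μ)).det := by
    rw [Matrix.charpoly]
    have := RingHom.map_det (evalRingHom μ) (charmatrix B)
    simpa [RingHom.mapMatrix_apply] using this
  have h2 : (charmatrix B).map (evalRingHom μ) = μ • (1 : Matrix (Fin r) (Fin r) ℂ) - B := by
    ext i j
    by_cases hij : i = j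
    · subst hij; simp [charmatrix_apply_eq, Matrix.one_apply, Matrix.smul_apply]
    · simp [charmatrix_apply_ne _ _ _ hij, Matrix.one_apply_ne hij, Matrix.smul_apply,
        Matrix.sub_apply]
  have h3 : B - μ • (1 : Matrix (Fin r) (Fin r) ℂ)
      = -(μ • (1 : Matrix (Fin r) (Fin r) ℂ) - B) := (neg_sub _ _).symm
  rw [h3, Matrix.det_neg, ← h2, ← h1, Fintype.card_fin]


/-- **Structure of the characteristic polynomial of the spectral curve.**
Let `c₁,…,c_N` be pairwise distinct, `f(λ) = Π_i (λ−c_i)`, and let `A_i` be similar to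
`A⁰_i` for each `i`. With `L(λ) = Σ_i A_i·Π_{j≠i}(λ−c_j)` and
`L⁰(λ) = Σ_i A⁰_i·Π_{j≠i}(λ−c_j)`, there are polynomials `p_ℓ` (`ℓ = 2,…,r`) of degree at
most `(N−1)ℓ − N` with
`det(L(λ) − μ̃I) = det(L⁰(λ) − μ̃I) + f(λ)·Σ_{ℓ=2}^r p_ℓ(λ) μ̃^{r−ℓ}` for all `λ, μ̃`. -/
theorem spectral_curve_characteristic_structure
    (r N : ℕ) (hr : 2 ≤ r) (hN : 2 ≤ N)
    (c : Fin N → ℂ) (hc : ∀ i j : Fin N, i ≠ j → c i ≠ c j)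
    (A A0 : Fin N → Matrix (Fin r) (Fin r) ℂ)
    (hsim : ∀ i : Fin N, ∃ g : (Matrix (Fin r) (Fin r) ℂ)ˣ,
        A i = (g : Matrix (Fin r) (Fin r) ℂ) * A0 i * (↑g⁻¹ : Matrix (Fin r) (Fin r) ℂ)) :
    ∃ p : ℕ → Polynomial ℂ,
      (∀ ℓ ∈ Finset.Icc 2 r, (p ℓ).natDegree ≤ (N - 1) * ℓ - N) ∧
      ∀ z μ : ℂ,
        (∑ i, (∏ j ∈ Finset.univ.erase i, (z - c j)) • A i
            - μ • (1 : Matrix (Fin r) (Fin r) ℂ)).det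
          = (∑ i, (∏ j ∈ Finset.univ.erase i, (z - c j)) • A0 i
              - μ • (1 : Matrix (Fin r) (Fin r) ℂ)).det
            + (∏ i, (z - c i)) * ∑ ℓ ∈ Finset.Icc 2 r, (p ℓ).eval z * μ ^ (r - ℓ) := by
  classical
  set e : Fin N → Polynomial ℂ := fun i => ∏ j ∈ Finset.univ.erase i, (X - C (c j)) with he
  set f : Polynomial ℂ := ∏ i, (X - C (c i)) with hf
  set M : Matrix (Fin r) (Fin r) (Polynomial ℂ) := ∑ i, e i • (A i).map C with hM
  set M0 : Matrix (Fin r) (Fin r) (Polynomial ℂ) := ∑ i, e i • (A0 i).map C with hM0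
  set q : Polynomial (Polynomial ℂ) := M.charpoly - M0.charpoly with hq
  have heval : ∀ (i : Fin N) (z : ℂ),
      (e i).eval z = ∏ j ∈ Finset.univ.erase i, (z - c j) := by
    intro i z; simp [he, eval_prod]
  have hfeval : ∀ z : ℂ, f.eval z = ∏ i, (z - c i) := by
    intro z; simp [hf, eval_prod]
  have hmap : ∀ (B : Fin N → Matrix (Fin r) (Fin r) ℂ) (z : ℂ),
      (∑ i, e i • (B i).map C).map (evalRingHom z) = ∑ i, ((e i).eval z) • B i := by
    intro B z; ext x y
    simp [Matrix.map_apply, Matrix.sum_apply, Matrix.smul_apply, smul_eq_mul, eval_finset_sum]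
  have hedeg : ∀ i : Fin N, (e i).natDegree ≤ N - 1 := by
    intro i
    refine (Polynomial.natDegree_prod_le _ _).trans ?_
    have h := Finset.sum_le_card_nsmul (Finset.univ.erase i)
      (fun j => (X - C (c j)).natDegree) 1 (fun j _ => (natDegree_X_sub_C (c j)).le)
    have hcard : (Finset.univ.erase i).card = N - 1 := by
      rw [Finset.card_erase_of_mem (Finset.mem_univ i), Finset.card_univ, Fintype.card_fin]
    rw [hcard] at h
    simpa using h
  have hMdeg : ∀ (B : Fin N → Matrix (Fin r) (Fin r) ℂ) (x y : Fin r),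
      ((∑ i, e i • (B i).map C) x y).natDegree ≤ N - 1 := by
    intro B x y
    rw [Matrix.sum_apply]
    refine Polynomial.natDegree_sum_le_of_forall_le _ _ fun i _ => ?_
    rw [Matrix.smul_apply, smul_eq_mul]
    refine Polynomial.natDegree_mul_le.trans ?_
    simpa [Matrix.map_apply, Polynomial.natDegree_C] using hedeg i
  have hchardeg : ∀ k, (q.coeff k).natDegree ≤ (N - 1) * (r - k) := by
    intro k
    have h1 := charpoly_coeff_natDegree_le M (hMdeg A) k
    have h2 := charpoly_coeff_natDegree_le M0 (hMdeg A0) k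
    rw [show q.coeff k = M.charpoly.coeff k - M0.charpoly.coeff k by simp [hq]]
    exact (Polynomial.natDegree_sub_le _ _).trans (max_le h1 h2)
  -- traces agree
  have htrA : ∀ B : Matrix (Fin r) (Fin r) ℂ,
      (B.map (C : ℂ → Polynomial ℂ)).trace = C B.trace := by
    intro B; simp [Matrix.trace, Matrix.diag, Matrix.map_apply]
  have htrace : M.trace = M0.trace := by
    rw [hM, hM0, Matrix.trace_sum, Matrix.trace_sum]
    refine Finset.sum_congr rfl fun i _ => ?_
    obtain ⟨g, hg⟩ := hsim i
    rw [Matrix.trace_smul, Matrix.trace_smul, htrA, htrA, hg, Matrix.trace_units_conj]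
  have : Nonempty (Fin r) := ⟨⟨0, by omega⟩⟩
  have hnd : M.charpoly.natDegree = r := by simpa using M.charpoly_natDegree_eq_dim
  have hnd0 : M0.charpoly.natDegree = r := by simpa using M0.charpoly_natDegree_eq_dim
  have hcoeff_top : ∀ k, r - 1 ≤ k → q.coeff k = 0 := by
    intro k hk
    have hksplit : k = r - 1 ∨ k = r ∨ r < k := by omega
    rcases hksplit with h | h | h
    · have e1 := Matrix.trace_eq_neg_charpoly_coeff M
      have e2 := Matrix.trace_eq_neg_charpoly_coeff M0
      rw [htrace, e2] at e1
      have e3 : M.charpoly.coeff (Fintype.card (Fin r) - 1)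
          = M0.charpoly.coeff (Fintype.card (Fin r) - 1) := by
        have := congrArg Neg.neg e1; simpa using this.symm
      rw [Fintype.card_fin] at e3
      simp [hq, h, Polynomial.coeff_sub, e3]
    · have m1 := (Matrix.charpoly_monic M).coeff_natDegree
      have m2 := (Matrix.charpoly_monic M0).coeff_natDegree
      rw [hnd] at m1; rw [hnd0] at m2
      simp [hq, h, Polynomial.coeff_sub, m1, m2]
    · have z1 : M.charpoly.coeff k = 0 :=
        Polynomial.coeff_eq_zero_of_natDegree_lt (by omega)
      have z2 : M0.charpoly.coeff k = 0 :=
        Polynomial.coeff_eq_zero_of_natDegree_lt (by omega)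
      simp [hq, Polynomial.coeff_sub, z1, z2]
  have hqdeg : q.natDegree ≤ r - 2 :=
    Polynomial.natDegree_le_iff_coeff_eq_zero.mpr fun m hm => hcoeff_top m (by omega)
  -- divisibility of coefficients by f
  have hinj : Function.Injective c := by
    intro i j hij
    by_contra hne
    exact hc i j hne hij
  have hmapq : ∀ m : Fin N, q.map (evalRingHom (c m)) = 0 := by
    intro m
    have collapse : ∀ B : Fin N → Matrix (Fin r) (Fin r) ℂ,
        (∑ i, ((e i).eval (c m)) • B i) = ((e m).eval (c m)) • B m := by
      intro B
      refine Finset.sum_eq_single m (fun i _ hi => ?_) (by simp)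
      have h0 : (e i).eval (c m) = 0 := by
        rw [heval]
        refine Finset.prod_eq_zero (Finset.mem_erase.2 ⟨Ne.symm hi, Finset.mem_univ m⟩) ?_
        simp
      rw [h0, zero_smul]
    obtain ⟨g, hg⟩ := hsim m
    have hA : ((e m).eval (c m)) • A m = (g : Matrix (Fin r) (Fin r) ℂ) * (((e m).eval (c m)) • A0 m) * (↑g⁻¹ : Matrix (Fin r) (Fin r) ℂ) := by
      rw [hg, Matrix.mul_smul, Matrix.smul_mul]
    have key : (M.map (evalRingHom (c m))).charpoly = (M0.map (evalRingHom (c m))).charpoly := by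
      rw [hM, hM0, hmap A (c m), hmap A0 (c m), collapse A, collapse A0, hA]
      exact charpoly_conj_aux g _
    rw [hq, Polynomial.map_sub, ← Matrix.charpoly_map, ← Matrix.charpoly_map, key, sub_self]
  have hdvd : ∀ k, f ∣ q.coeff k := by
    intro k
    apply prod_X_sub_C_dvd_of_roots c hinj
    intro m
    have h0 : (q.map (evalRingHom (c m))).coeff k = 0 := by rw [hmapq m]; simp
    rwa [Polynomial.coeff_map, coe_evalRingHom] at h0
  have hfmonic : f.Monic := monic_prod_of_monic _ _ fun i _ => monic_X_sub_C (c i)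
  have hf0 : f ≠ 0 := hfmonic.ne_zero
  have hfdeg : f.natDegree = N := by
    rw [hf, Polynomial.natDegree_prod _ _ fun i _ => X_sub_C_ne_zero (c i)]
    simp [natDegree_X_sub_C]
  set s : ℕ → Polynomial ℂ := fun k => q.coeff k / f with hsdef
  have hfs : ∀ k, f * s k = q.coeff k := fun k =>
    EuclideanDomain.mul_div_cancel' hf0 (hdvd k)
  refine ⟨fun ℓ => ((-1 : ℂ) ^ r) • s (r - ℓ), ?_, ?_⟩
  · intro ℓ hℓ
    rw [Finset.mem_Icc] at hℓ
    refine (Polynomial.natDegree_smul_le _ _).trans ?_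
    by_cases h0 : s (r - ℓ) = 0
    · simp [h0]
    · have hmul := Polynomial.natDegree_mul hf0 h0
      rw [hfs] at hmul
      have hb := hchardeg (r - ℓ)
      rw [show r - (r - ℓ) = ℓ by omega] at hb
      rw [hfdeg] at hmul
      generalize hK : (N - 1) * ℓ = K at hb ⊢
      omega
  · intro z μ
    have hMz : M.map (evalRingHom z) = ∑ i, (∏ j ∈ Finset.univ.erase i, (z - c j)) • A i := by
      rw [hM, hmap A z]
      exact Finset.sum_congr rfl fun i _ => by rw [heval]
    have hM0z : M0.map (evalRingHom z)
        = ∑ i, (∏ j ∈ Finset.univ.erase i, (z - c j)) • A0 i := by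
      rw [hM0, hmap A0 z]
      exact Finset.sum_congr rfl fun i _ => by rw [heval]
    have hdA : (∑ i, (∏ j ∈ Finset.univ.erase i, (z - c j)) • A i
        - μ • (1 : Matrix (Fin r) (Fin r) ℂ)).det
        = (-1 : ℂ) ^ r * ((M.charpoly.map (evalRingHom z)).eval μ) := by
      rw [← hMz, det_sub_smul_one, Matrix.charpoly_map]
    have hdA0 : (∑ i, (∏ j ∈ Finset.univ.erase i, (z - c j)) • A0 i
        - μ • (1 : Matrix (Fin r) (Fin r) ℂ)).det
        = (-1 : ℂ) ^ r * ((M0.charpoly.map (evalRingHom z)).eval μ) := by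
      rw [← hM0z, det_sub_smul_one, Matrix.charpoly_map]
    -- expand eval of q.map
    have hqz : (q.map (evalRingHom z)).natDegree < r - 1 :=
      lt_of_le_of_lt (le_trans Polynomial.natDegree_map_le hqdeg) (by omega)
    have hexp : ((q.map (evalRingHom z)).eval μ)
        = ∑ k ∈ Finset.range (r - 1), (q.coeff k).eval z * μ ^ k := by
      rw [Polynomial.eval_eq_sum_range' hqz]
      exact Finset.sum_congr rfl fun k _ => by rw [Polynomial.coeff_map, coe_evalRingHom]
    have hcoeff_eval : ∀ k, (q.coeff k).eval z = f.eval z * (s k).eval z := by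
      intro k; rw [← hfs k, eval_mul]
    have hre : ∑ ℓ ∈ Finset.Icc 2 r, (((-1 : ℂ) ^ r) • s (r - ℓ)).eval z * μ ^ (r - ℓ)
        = ∑ k ∈ Finset.range (r - 1), (-1 : ℂ) ^ r * (s k).eval z * μ ^ k := by
      refine Finset.sum_nbij' (fun ℓ => r - ℓ) (fun k => r - k) ?_ ?_ ?_ ?_ ?_
      · intro ℓ hℓ; rw [Finset.mem_Icc] at hℓ; rw [Finset.mem_range]; omega
      · intro k hk; rw [Finset.mem_range] at hk; rw [Finset.mem_Icc]; omega
      · intro ℓ hℓ; rw [Finset.mem_Icc] at hℓ; omega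
      · intro k hk; rw [Finset.mem_range] at hk; omega
      · intro ℓ hℓ
        rw [Polynomial.eval_smul, smul_eq_mul]
    rw [hdA, hdA0]
    have hqeval : (q.map (evalRingHom z)).eval μ
        = (M.charpoly.map (evalRingHom z)).eval μ
          - (M0.charpoly.map (evalRingHom z)).eval μ := by
      rw [hq, Polynomial.map_sub, Polynomial.eval_sub]
    have hkey : (-1 : ℂ) ^ r * ((q.map (evalRingHom z)).eval μ)
        = f.eval z * ∑ ℓ ∈ Finset.Icc 2 r, (((-1 : ℂ) ^ r) • s (r - ℓ)).eval z * μ ^ (r - ℓ) := by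
      rw [hexp, hre, Finset.mul_sum, Finset.mul_sum]
      refine Finset.sum_congr rfl fun k _ => ?_
      rw [hcoeff_eval k]
      ring
    rw [hqeval] at hkey
    rw [hfeval z] at hkey
    linear_combination hkey
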